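/- Let f(x) = e^{-x²}. Then for every n ∈ ℕ, (f·u^n)^{(n)}(x) = n! Σ_{k=0}^n binom(n,k) Σ_{l=0}^k binom(k,l) Σ_{m=0}^{⌊k/2⌋} ((-i)^{k-l}(-1)^{m+k}/(m!(k-2m)!)) x^l (2x)^{k-2m} e^{-x²}, where u(x) = x - i. -/

import Mathlib

open Complex Finset

noncomputable def dcoef (k m : ℕ) : ℂ :=
  if 2 * m ≤ k then (k.factorial : ℂ) * (-1) ^ (m + k) /
    ((m.factorial : ℂ) * ((k - 2 * m).factorial : ℂ)) else 0



lemma contDiff_gauss : ContDiff ℝ ⊤ (fun y : ℝ => Complex.exp (-(y : ℂ) ^ 2)) := by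
  apply ((Complex.contDiff_exp : ContDiff ℂ ⊤ Complex.exp).restrict_scalars ℝ).comp
  exact (Complex.ofRealCLM.contDiff.pow 2).neg

lemma contDiff_upow (n : ℕ) : ContDiff ℝ ⊤ (fun y : ℝ => ((y : ℂ) - I) ^ n) :=
  (Complex.ofRealCLM.contDiff.sub contDiff_const).pow n



lemma upow_iteratedDeriv (n j : ℕ) :
    iteratedDeriv j (fun y : ℝ => ((y : ℂ) - I) ^ n)
      = fun x : ℝ => (n.descFactorial j : ℂ) * ((x : ℂ) - I) ^ (n - j) := by
  induction j with
  | zero => funext x; simp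
  | succ j ih =>
    funext x
    rw [iteratedDeriv_succ, ih]
    have h : HasDerivAt (fun z : ℂ => (n.descFactorial j : ℂ) * (z - I) ^ (n - j))
        ((n.descFactorial j : ℂ) * (((n - j : ℕ) : ℂ) * ((x : ℂ) - I) ^ (n - j - 1) * 1))
        (x : ℝ) := (((hasDerivAt_id _).sub_const I).pow _).const_mul _
    rw [h.comp_ofReal.deriv, Nat.descFactorial_succ,
      show n - (j + 1) = n - j - 1 by omega]
    push_cast
    ring

lemma dcoef_key (k m : ℕ) (hm : m ≤ k) (z : ℂ) :
    dcoef (k + 1) (m + 1) * z ^ (k + 1 - 2 * (m + 1))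
      = dcoef k m * (((k - 2 * m : ℕ) : ℂ) * z ^ (k - 2 * m - 1) * 2)
        + dcoef k (m + 1) * z ^ (k - 2 * (m + 1)) * (-z) := by
  rcases le_or_gt (2 * (m + 1)) k with h1 | h1
  · -- 2m+2 ≤ k
    obtain ⟨j, rfl⟩ : ∃ j, k = 2 * m + 2 + j := ⟨k - (2 * m + 2), by omega⟩
    have e1 : 2 * m + 2 + j + 1 - 2 * (m + 1) = j + 1 := by omega
    have e2 : 2 * m + 2 + j - 2 * m = j + 2 := by omega
    have e3 : 2 * m + 2 + j - 2 * m - 1 = j + 1 := by omega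
    have e4 : 2 * m + 2 + j - 2 * (m + 1) = j := by omega
    have c1 : 2 * (m + 1) ≤ 2 * m + 2 + j + 1 := by omega
    have c2 : 2 * m ≤ 2 * m + 2 + j := by omega
    have c3 : 2 * (m + 1) ≤ 2 * m + 2 + j := by omega
    rw [dcoef, dcoef, dcoef, if_pos c1, if_pos c2, if_pos c3, e1, e2, e4,
      show j + 2 - 1 = j + 1 by omega]
    have s1 : ((-1 : ℂ)) ^ (m + 1 + (2 * m + 2 + j + 1)) = (-1) ^ (m + (2 * m + 2 + j)) := by
      rw [show m + 1 + (2 * m + 2 + j + 1) = (m + (2 * m + 2 + j)) + 2 by ring, pow_add]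
      simp
    have s2 : ((-1 : ℂ)) ^ (m + 1 + (2 * m + 2 + j)) = -(-1) ^ (m + (2 * m + 2 + j)) := by
      rw [show m + 1 + (2 * m + 2 + j) = (m + (2 * m + 2 + j)) + 1 by ring, pow_succ]
      ring
    rw [s1, s2]
    have f1 : ((2 * m + 2 + j + 1).factorial : ℂ)
        = (2 * m + 2 + j + 1) * ((2 * m + 2 + j).factorial : ℂ) := by
      rw [Nat.factorial_succ]; push_cast; ring
    have f2 : ((m + 1).factorial : ℂ) = (m + 1) * (m.factorial : ℂ) := by
      rw [Nat.factorial_succ]; push_cast; ring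
    have f3 : ((j + 2).factorial : ℂ) = (j + 2) * ((j + 1).factorial : ℂ) := by
      rw [show j + 2 = (j + 1) + 1 from rfl, Nat.factorial_succ]; push_cast; ring
    have f4 : ((j + 1).factorial : ℂ) = (j + 1) * (j.factorial : ℂ) := by
      rw [Nat.factorial_succ]; push_cast; ring
    rw [f1, f2, f3, f4]
    have hm0 : (m.factorial : ℂ) ≠ 0 := Nat.cast_ne_zero.2 m.factorial_ne_zero
    have hj0 : (j.factorial : ℂ) ≠ 0 := Nat.cast_ne_zero.2 j.factorial_ne_zero
    have hm1 : ((m : ℂ) + 1) ≠ 0 := by exact_mod_cast (show (m + 1 : ℕ) ≠ 0 by omega)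
    have hj1 : ((j : ℂ) + 1) ≠ 0 := by exact_mod_cast (show (j + 1 : ℕ) ≠ 0 by omega)
    have hj2 : ((j : ℂ) + 2) ≠ 0 := by exact_mod_cast (show (j + 2 : ℕ) ≠ 0 by omega)
    set F1 : ℂ := (m.factorial : ℂ)
    set F2 : ℂ := (j.factorial : ℂ)
    have hB : ((m : ℂ) + 1) * F1 * (((j : ℂ) + 1) * F2) ≠ 0 :=
      mul_ne_zero (mul_ne_zero hm1 hm0) (mul_ne_zero hj1 hj0)
    have hD : F1 * (((j : ℂ) + 2) * (((j : ℂ) + 1) * F2)) ≠ 0 :=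
      mul_ne_zero hm0 (mul_ne_zero hj2 (mul_ne_zero hj1 hj0))
    have hF : ((m : ℂ) + 1) * F1 * F2 ≠ 0 := mul_ne_zero (mul_ne_zero hm1 hm0) hj0
    rw [div_mul_eq_mul_div, div_mul_eq_mul_div, div_mul_eq_mul_div, div_mul_eq_mul_div,
      div_add_div _ _ hD hF, div_eq_div_iff hB (mul_ne_zero hD hF)]
    push_cast
    ring
  · rcases lt_or_ge k (2 * m) with h2 | h2
    · rw [dcoef, dcoef, dcoef, if_neg (by omega), if_neg (by omega), if_neg (by omega)]
      ring
    rcases (by omega : k = 2 * m ∨ k = 2 * m + 1) with rfl | rfl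
    · simp [dcoef, show ¬ 2 * (m + 1) ≤ 2 * m + 1 by omega,
        show ¬ 2 * (m + 1) ≤ 2 * m by omega, show 2 * m - 2 * m = 0 by omega]
    · have c1 : 2 * (m + 1) ≤ 2 * m + 1 + 1 := by omega
      have c2 : 2 * m ≤ 2 * m + 1 := by omega
      have c3 : ¬ 2 * (m + 1) ≤ 2 * m + 1 := by omega
      rw [dcoef, dcoef, dcoef, if_pos c1, if_pos c2, if_neg c3,
        show 2 * m + 1 + 1 - 2 * (m + 1) = 0 by omega,
        show 2 * m + 1 - 2 * m = 1 by omega]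
      norm_num
      have s2 : ((-1 : ℂ)) ^ (m + 1 + (2 * m + 1 + 1)) = (-1) ^ (m + (2 * m + 1)) := by
        rw [show m + 1 + (2 * m + 1 + 1) = (m + (2 * m + 1)) + 2 by ring, pow_add]
        simp
      rw [s2]
      have f1 : ((2 * m + 1 + 1).factorial : ℂ)
          = (2 * m + 1 + 1) * ((2 * m + 1).factorial : ℂ) := by
        rw [Nat.factorial_succ]; push_cast; ring
      have f2 : ((m + 1).factorial : ℂ) = (m + 1) * (m.factorial : ℂ) := by
        rw [Nat.factorial_succ]; push_cast; ring
      rw [f1, f2]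
      have hm0 : (m.factorial : ℂ) ≠ 0 := Nat.cast_ne_zero.2 m.factorial_ne_zero
      have hm1 : ((m : ℂ) + 1) ≠ 0 := by exact_mod_cast (show (m + 1 : ℕ) ≠ 0 by omega)
      push_cast
      field_simp
      ring_nf

lemma dcoef_zero (k : ℕ) : dcoef k 0 = (-1) ^ k := by
  have h : ((k.factorial : ℂ)) ≠ 0 := Nat.cast_ne_zero.2 k.factorial_ne_zero
  simp only [dcoef, if_pos (by omega : 2 * 0 ≤ k), Nat.mul_zero, Nat.sub_zero,
    Nat.factorial_zero, Nat.cast_one, one_mul, zero_add]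
  rw [mul_comm, mul_div_assoc, div_self h, mul_one]

lemma dcoef_big {k m : ℕ} (h : k < 2 * m) : dcoef k m = 0 := by
  simp [dcoef, Nat.not_le.2 h]

lemma hasDerivAt_gauss' (x : ℝ) :
    HasDerivAt (fun y : ℝ => Complex.exp (-(y : ℂ) ^ 2))
      (Complex.exp (-(x : ℂ) ^ 2) * (-(2 * (x : ℂ)))) x := by
  have h : HasDerivAt (fun z : ℂ => Complex.exp (-z ^ 2))
      (Complex.exp (-(x : ℂ) ^ 2) * (-(2 * (x : ℂ)))) (x : ℝ) := by
    simpa using ((hasDerivAt_id ((x : ℝ) : ℂ)).pow 2).neg.cexp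
  exact h.comp_ofReal

lemma gauss_iteratedDeriv (k : ℕ) :
    iteratedDeriv k (fun y : ℝ => Complex.exp (-(y : ℂ) ^ 2))
      = fun x : ℝ => (∑ m ∈ range (k + 1), dcoef k m * (2 * (x : ℂ)) ^ (k - 2 * m))
          * Complex.exp (-(x : ℂ) ^ 2) := by
  induction k with
  | zero =>
    funext x
    simp [dcoef]
  | succ k ih =>
    funext x
    rw [iteratedDeriv_succ, ih]
    have hPC : HasDerivAt (fun z : ℂ => ∑ m ∈ range (k + 1), dcoef k m * (2 * z) ^ (k - 2 * m))
        (∑ m ∈ range (k + 1), dcoef k m *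
          (((k - 2 * m : ℕ) : ℂ) * (2 * (x : ℂ)) ^ (k - 2 * m - 1) * 2)) ((x : ℝ) : ℂ) := by
      refine HasDerivAt.fun_sum fun m _ => ?_
      simpa using
        (((hasDerivAt_id ((x : ℝ) : ℂ)).const_mul (2 : ℂ)).pow (k - 2 * m)).const_mul (dcoef k m)
    have hT := (hPC.comp_ofReal).mul (hasDerivAt_gauss' x)
    rw [show (fun x : ℝ => (∑ m ∈ range (k + 1), dcoef k m * (2 * (x : ℂ)) ^ (k - 2 * m)) * Complex.exp (-(x : ℂ) ^ 2)) = ((fun y : ℝ => ∑ m ∈ range (k + 1), dcoef k m * (2 * (y : ℂ)) ^ (k - 2 * m)) * fun y : ℝ => Complex.exp (-(y : ℂ) ^ 2)) from rfl, hT.deriv]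
    have key : ∑ m ∈ range (k + 1 + 1), dcoef (k + 1) m * (2 * (x : ℂ)) ^ (k + 1 - 2 * m)
        = (∑ m ∈ range (k + 1), dcoef k m *
            (((k - 2 * m : ℕ) : ℂ) * (2 * (x : ℂ)) ^ (k - 2 * m - 1) * 2))
          + (∑ m ∈ range (k + 1), dcoef k m * (2 * (x : ℂ)) ^ (k - 2 * m)) * (-(2 * (x : ℂ))) := by
      set z : ℂ := 2 * (x : ℂ) with hz
      rw [Finset.sum_range_succ']
      have h0 : dcoef (k + 1) 0 * z ^ (k + 1 - 2 * 0) = dcoef k 0 * z ^ (k - 2 * 0) * (-z) := by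
        rw [dcoef_zero, dcoef_zero, show k + 1 - 2 * 0 = k + 1 by omega,
          show k - 2 * 0 = k by omega, pow_succ, pow_succ]
        ring
      rw [h0]
      have h1 : ∀ m ∈ range (k + 1),
          dcoef (k + 1) (m + 1) * z ^ (k + 1 - 2 * (m + 1))
            = dcoef k m * (((k - 2 * m : ℕ) : ℂ) * z ^ (k - 2 * m - 1) * 2)
              + dcoef k (m + 1) * z ^ (k - 2 * (m + 1)) * (-z) := fun m hm =>
        dcoef_key k m (by simpa using Nat.lt_succ_iff.mp (Finset.mem_range.mp hm)) z
      rw [Finset.sum_congr rfl h1, Finset.sum_add_distrib]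
      rw [Finset.sum_mul, Finset.sum_range_succ'
        (fun m => dcoef k m * z ^ (k - 2 * m) * (-z)) k]
      rw [add_assoc]
      congr 1
      rw [Finset.sum_range_succ (fun m => dcoef k (m + 1) * z ^ (k - 2 * (m + 1)) * (-z)) k]
      rw [dcoef_big (by omega : k < 2 * (k + 1))]
      ring
    rw [key]
    ring


lemma leibniz {f g : ℝ → ℂ} (hf : ContDiff ℝ ⊤ f) (hg : ContDiff ℝ ⊤ g) (n : ℕ) :
    iteratedDeriv n (fun y => f y * g y)
      = fun x => ∑ k ∈ range (n + 1),
          (n.choose k : ℂ) * (iteratedDeriv k f x * iteratedDeriv (n - k) g x) := by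
  have hdf : ∀ (k : ℕ) (x : ℝ),
      HasDerivAt (iteratedDeriv k f) (iteratedDeriv (k + 1) f x) x := fun k x => by
    rw [iteratedDeriv_succ]
    exact ((hf.differentiable_iteratedDeriv k (by simp)).differentiableAt).hasDerivAt
  have hdg : ∀ (k : ℕ) (x : ℝ),
      HasDerivAt (iteratedDeriv k g) (iteratedDeriv (k + 1) g x) x := fun k x => by
    rw [iteratedDeriv_succ]
    exact ((hg.differentiable_iteratedDeriv k (by simp)).differentiableAt).hasDerivAt
  induction n with
  | zero => funext x; simp
  | succ n ih =>
    funext x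
    rw [iteratedDeriv_succ, ih]
    have H : HasDerivAt (fun x : ℝ => ∑ k ∈ range (n + 1),
        (n.choose k : ℂ) * (iteratedDeriv k f x * iteratedDeriv (n - k) g x))
        (∑ k ∈ range (n + 1), (n.choose k : ℂ) *
          (iteratedDeriv (k + 1) f x * iteratedDeriv (n - k) g x
            + iteratedDeriv k f x * iteratedDeriv (n - k + 1) g x)) x :=
      HasDerivAt.fun_sum fun k _ => (((hdf k x).mul (hdg (n - k) x)).const_mul _)
    rw [H.deriv]
    -- sum manipulation
    have expand : ∀ k ∈ range (n + 1),
        (n.choose k : ℂ) * (iteratedDeriv (k + 1) f x * iteratedDeriv (n - k) g x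
            + iteratedDeriv k f x * iteratedDeriv (n - k + 1) g x)
          = (n.choose k : ℂ) * (iteratedDeriv (k + 1) f x * iteratedDeriv (n - k) g x)
            + (n.choose k : ℂ) * (iteratedDeriv k f x * iteratedDeriv (n - k + 1) g x) :=
      fun k _ => by ring
    rw [Finset.sum_congr rfl expand, Finset.sum_add_distrib]
    -- RHS
    rw [Finset.sum_range_succ' (fun k => (( (n+1).choose k : ℂ)) *
      (iteratedDeriv k f x * iteratedDeriv (n + 1 - k) g x)) (n + 1)]
    have rhs1 : ∀ k ∈ range (n + 1),
        (((n + 1).choose (k + 1) : ℂ)) *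
            (iteratedDeriv (k + 1) f x * iteratedDeriv (n + 1 - (k + 1)) g x)
          = (n.choose k : ℂ) * (iteratedDeriv (k + 1) f x * iteratedDeriv (n - k) g x)
            + (n.choose (k + 1) : ℂ) *
              (iteratedDeriv (k + 1) f x * iteratedDeriv (n - k) g x) := by
      intro k hk
      rw [show n + 1 - (k + 1) = n - k by omega, Nat.choose_succ_succ]
      push_cast
      ring
    rw [Finset.sum_congr rfl rhs1, Finset.sum_add_distrib]
    -- second pieces agree
    have second : ∑ k ∈ range (n + 1),
        (n.choose k : ℂ) * (iteratedDeriv k f x * iteratedDeriv (n - k + 1) g x)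
          = ∑ k ∈ range (n + 1),
            (n.choose (k + 1) : ℂ) * (iteratedDeriv (k + 1) f x * iteratedDeriv (n - k) g x)
            + ((n + 1).choose 0 : ℂ) *
              (iteratedDeriv 0 f x * iteratedDeriv (n + 1 - 0) g x) := by
      rw [Finset.sum_range_succ' (fun k => (n.choose k : ℂ) *
        (iteratedDeriv k f x * iteratedDeriv (n - k + 1) g x)) n]
      rw [Finset.sum_range_succ (fun k => (n.choose (k + 1) : ℂ) *
        (iteratedDeriv (k + 1) f x * iteratedDeriv (n - k) g x)) n]
      rw [Nat.choose_succ_self]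
      have congr2 : ∀ k ∈ range n,
          (n.choose (k + 1) : ℂ) * (iteratedDeriv (k + 1) f x * iteratedDeriv (n - (k + 1) + 1) g x)
            = (n.choose (k + 1) : ℂ) * (iteratedDeriv (k + 1) f x * iteratedDeriv (n - k) g x) := by
        intro k hk
        have hkn := Finset.mem_range.mp hk
        rw [show n - (k + 1) + 1 = n - k by omega]
      rw [Finset.sum_congr rfl congr2]
      simp
    rw [second]
    ring

/-- For `f(x) = e^{-x²}` and `u(x) = x - i`, the `n`-th derivative of
`f·uⁿ` has the explicit Hermite-polynomial expansion
`(f·uⁿ)^{(n)}(x) = n! Σ_{k=0}^n C(n,k) Σ_{l=0}^k C(k,l) Σ_{m=0}^{⌊k/2⌋}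
  ((-i)^{k-l}(-1)^{m+k}/(m!(k-2m)!)) x^l (2x)^{k-2m} e^{-x²}`. -/
theorem gaussian_u_pow_iteratedDeriv (n : ℕ) (x : ℝ) :
    iteratedDeriv n (fun y : ℝ => Complex.exp (-(y : ℂ) ^ 2) * ((y : ℂ) - I) ^ n) x
      = (n.factorial : ℂ) *
        ∑ k ∈ range (n + 1), (n.choose k : ℂ) *
          ∑ l ∈ range (k + 1), (k.choose l : ℂ) *
            ∑ m ∈ range (k / 2 + 1),
              ((-I) ^ (k - l) * (-1 : ℂ) ^ (m + k) /
                  ((m.factorial : ℂ) * ((k - 2 * m).factorial : ℂ))) *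
                (x : ℂ) ^ l * (2 * (x : ℂ)) ^ (k - 2 * m) * Complex.exp (-(x : ℂ) ^ 2) := by
  have hL : iteratedDeriv n (fun y : ℝ => Complex.exp (-(y : ℂ) ^ 2) * ((y : ℂ) - I) ^ n) x
      = ∑ k ∈ range (n + 1), (n.choose k : ℂ) *
          (iteratedDeriv k (fun y : ℝ => Complex.exp (-(y : ℂ) ^ 2)) x *
            iteratedDeriv (n - k) (fun y : ℝ => ((y : ℂ) - I) ^ n) x) :=
    congrFun (leibniz contDiff_gauss (contDiff_upow n) n) x
  rw [hL, Finset.mul_sum]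
  refine Finset.sum_congr rfl fun k hk => ?_
  have hkn : k ≤ n := Nat.lt_succ_iff.mp (Finset.mem_range.mp hk)
  rw [gauss_iteratedDeriv, upow_iteratedDeriv]
  beta_reduce
  rw [show n - (n - k) = k by omega]
  have hdF : (k.factorial : ℂ) * (n.descFactorial (n - k) : ℂ) = (n.factorial : ℂ) := by
    have := Nat.factorial_mul_descFactorial (show n - k ≤ n by omega)
    rw [show n - (n - k) = k by omega] at this
    exact_mod_cast this
  rw [← hdF]
  have hsub : ∑ m ∈ range (k + 1), dcoef k m * (2 * (x : ℂ)) ^ (k - 2 * m)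
      = ∑ m ∈ range (k / 2 + 1), dcoef k m * (2 * (x : ℂ)) ^ (k - 2 * m) := by
    refine (Finset.sum_subset ?_ ?_).symm
    · intro m hm
      simp only [Finset.mem_range] at *
      omega
    · intro m hm hnot
      simp only [Finset.mem_range] at *
      rw [dcoef_big (by omega)]
      ring
  rw [hsub, sub_pow (x : ℂ) I k]
  have hdc : ∀ m ∈ range (k / 2 + 1),
      dcoef k m * (2 * (x : ℂ)) ^ (k - 2 * m)
        = (k.factorial : ℂ) * (-1) ^ (m + k) /
            ((m.factorial : ℂ) * ((k - 2 * m).factorial : ℂ)) * (2 * (x : ℂ)) ^ (k - 2 * m) := by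
    intro m hm
    have : 2 * m ≤ k := by
      have := Finset.mem_range.mp hm
      omega
    rw [dcoef, if_pos this]
  rw [Finset.sum_congr rfl hdc]
  simp only [Finset.sum_mul, Finset.mul_sum]
  refine Finset.sum_congr rfl fun l hl => Finset.sum_congr rfl fun m hm => ?_
  have hlk : l ≤ k := Nat.lt_succ_iff.mp (Finset.mem_range.mp hl)
  rw [neg_pow I (k - l), show ((-1 : ℂ)) ^ (k - l) = (-1) ^ (l + k) by
    rw [show l + k = (k - l) + 2 * l by omega, pow_add, pow_mul]; simp]
  ring
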